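/- (Krawtchouk type: commutator relations for R, F, L.) Assume \theta_i = \theta^*_i = d - 2i for all i. Then [A^*, L] = 2L, [A^*, F] = 0, [A^*, R] = -2R, and consequently R = ([A^*,[A^*,A]] - 2[A^*,A])/8, F = A - [A^*,[A^*,A]]/4, L = ([A^*,[A^*,A]] + 2[A^*,A])/8. -/

import Mathlib

/-- A tridiagonal system `(A; {E_i}; A*; {E*_i})` of diameter `d` on `V`:
`A, A*` are diagonalizable with primitive idempotents `E_i`, `E*_i` (in standard
orderings, so that the tridiagonal conditions hold), mutually distinct eigenvalues
`θ_i`, `θ*_i`, and no nontrivial proper subspace of `V` is invariant under both. -/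
structure TDSystem (F V : Type*) [Field F] [AddCommGroup V] [Module F V] (d : ℕ) where
  A : Module.End F V
  As : Module.End F V
  E : ℕ → Module.End F V
  Es : ℕ → Module.End F V
  θ : ℕ → F
  θs : ℕ → F
  hEE : ∀ i ≤ d, ∀ j ≤ d, E i * E j = if i = j then E i else 0
  hEsEs : ∀ i ≤ d, ∀ j ≤ d, Es i * Es j = if i = j then Es i else 0
  hEsum : ∑ i ∈ Finset.range (d + 1), E i = 1
  hEssum : ∑ i ∈ Finset.range (d + 1), Es i = 1
  hEne : ∀ i ≤ d, E i ≠ 0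
  hEsne : ∀ i ≤ d, Es i ≠ 0
  hA : A = ∑ i ∈ Finset.range (d + 1), θ i • E i
  hAs : As = ∑ i ∈ Finset.range (d + 1), θs i • Es i
  hθ : ∀ i ≤ d, ∀ j ≤ d, i ≠ j → θ i ≠ θ j
  hθs : ∀ i ≤ d, ∀ j ≤ d, i ≠ j → θs i ≠ θs j
  htri : ∀ i ≤ d, ∀ j ≤ d, (i + 1 < j ∨ j + 1 < i) → Es i * A * Es j = 0
  htris : ∀ i ≤ d, ∀ j ≤ d, (i + 1 < j ∨ j + 1 < i) → E i * As * E j = 0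
  hirr : ∀ W : Submodule F V, (∀ v ∈ W, A v ∈ W) → (∀ v ∈ W, As v ∈ W) → W = ⊥ ∨ W = ⊤

/-- For a tridiagonal system of Krawtchouk type
(`θ_i = θ*_i = d - 2i`), with `R, F, L` the raising/flat/lowering parts of `A`
relative to the `E*_i`, one has `[A*,L] = 2L`, `[A*,F] = 0`, `[A*,R] = -2R`, and
`R = ([A*,[A*,A]] - 2[A*,A])/8`, `F = A - [A*,[A*,A]]/4`,
`L = ([A*,[A*,A]] + 2[A*,A])/8`. -/
theorem stmt16 {F V : Type*} [Field F] [AddCommGroup V] [Module F V]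
    [FiniteDimensional F V] [Nontrivial V] (d : ℕ) (hd : 1 ≤ d)
    (Φ : TDSystem F V d)
    (hθ : ∀ i ≤ d, Φ.θ i = (d : F) - 2 * (i : F))
    (hθs : ∀ i ≤ d, Φ.θs i = (d : F) - 2 * (i : F))
    (R Fm L : Module.End F V)
    (hR : R = ∑ i ∈ Finset.range d, Φ.Es (i + 1) * Φ.A * Φ.Es i)
    (hF : Fm = ∑ i ∈ Finset.range (d + 1), Φ.Es i * Φ.A * Φ.Es i)
    (hL : L = ∑ i ∈ Finset.Icc 1 d, Φ.Es (i - 1) * Φ.A * Φ.Es i) :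
    Φ.As * L - L * Φ.As = (2 : F) • L ∧
    Φ.As * Fm - Fm * Φ.As = 0 ∧
    Φ.As * R - R * Φ.As = (-2 : F) • R ∧
    R = (8 : F)⁻¹ •
      ((Φ.As * (Φ.As * Φ.A - Φ.A * Φ.As) - (Φ.As * Φ.A - Φ.A * Φ.As) * Φ.As)
        - (2 : F) • (Φ.As * Φ.A - Φ.A * Φ.As)) ∧
    Fm = Φ.A - (4 : F)⁻¹ •
      (Φ.As * (Φ.As * Φ.A - Φ.A * Φ.As) - (Φ.As * Φ.A - Φ.A * Φ.As) * Φ.As) ∧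
    L = (8 : F)⁻¹ •
      ((Φ.As * (Φ.As * Φ.A - Φ.A * Φ.As) - (Φ.As * Φ.A - Φ.A * Φ.As) * Φ.As)
        + (2 : F) • (Φ.As * Φ.A - Φ.A * Φ.As)) := by
  classical
  have hAsEs : ∀ j ≤ d, Φ.As * Φ.Es j = Φ.θs j • Φ.Es j := by
    intro j hj
    rw [Φ.hAs, Finset.sum_mul, Finset.sum_eq_single j]
    · rw [smul_mul_assoc, Φ.hEsEs j hj j hj, if_pos rfl]
    · intro i hi hij
      rw [smul_mul_assoc, Φ.hEsEs i (Nat.lt_succ_iff.mp (Finset.mem_range.mp hi)) j hj,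
        if_neg hij, smul_zero]
    · intro h; exact absurd (Finset.mem_range.mpr (Nat.lt_succ_of_le hj)) h
  have hEsAs : ∀ j ≤ d, Φ.Es j * Φ.As = Φ.θs j • Φ.Es j := by
    intro j hj
    rw [Φ.hAs, Finset.mul_sum, Finset.sum_eq_single j]
    · rw [mul_smul_comm, Φ.hEsEs j hj j hj, if_pos rfl]
    · intro i hi hij
      rw [mul_smul_comm, Φ.hEsEs j hj i (Nat.lt_succ_iff.mp (Finset.mem_range.mp hi)),
        if_neg (Ne.symm hij), smul_zero]
    · intro h; exact absurd (Finset.mem_range.mpr (Nat.lt_succ_of_le hj)) h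
  have comm : ∀ a ≤ d, ∀ b ≤ d,
      Φ.As * (Φ.Es a * Φ.A * Φ.Es b) - (Φ.Es a * Φ.A * Φ.Es b) * Φ.As
        = (Φ.θs a - Φ.θs b) • (Φ.Es a * Φ.A * Φ.Es b) := by
    intro a ha b hb
    have h1 : Φ.As * (Φ.Es a * Φ.A * Φ.Es b) = Φ.θs a • (Φ.Es a * Φ.A * Φ.Es b) := by
      rw [show Φ.As * (Φ.Es a * Φ.A * Φ.Es b) = (Φ.As * Φ.Es a) * Φ.A * Φ.Es b by
        rw [mul_assoc, mul_assoc, mul_assoc], hAsEs a ha, smul_mul_assoc, smul_mul_assoc]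
    have h2 : (Φ.Es a * Φ.A * Φ.Es b) * Φ.As = Φ.θs b • (Φ.Es a * Φ.A * Φ.Es b) := by
      rw [mul_assoc, hEsAs b hb, mul_smul_comm]
    rw [h1, h2, ← sub_smul]
  have hcR : Φ.As * R - R * Φ.As = (-2 : F) • R := by
    rw [hR, Finset.mul_sum, Finset.sum_mul, ← Finset.sum_sub_distrib, Finset.smul_sum]
    refine Finset.sum_congr rfl fun i hi => ?_
    have hi' : i < d := Finset.mem_range.mp hi
    rw [comm (i + 1) hi' i hi'.le, hθs (i + 1) hi', hθs i hi'.le]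
    congr 1
    push_cast; ring
  have hcF : Φ.As * Fm - Fm * Φ.As = 0 := by
    rw [hF, Finset.mul_sum, Finset.sum_mul, ← Finset.sum_sub_distrib]
    refine Finset.sum_eq_zero fun i hi => ?_
    have hi' : i ≤ d := Nat.lt_succ_iff.mp (Finset.mem_range.mp hi)
    rw [comm i hi' i hi', sub_self, zero_smul]
  have hcL : Φ.As * L - L * Φ.As = (2 : F) • L := by
    rw [hL, Finset.mul_sum, Finset.sum_mul, ← Finset.sum_sub_distrib, Finset.smul_sum]
    refine Finset.sum_congr rfl fun i hi => ?_
    obtain ⟨h1, h2⟩ := Finset.mem_Icc.mp hi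
    rw [comm (i - 1) (by omega) i h2, hθs (i - 1) (by omega), hθs i h2]
    congr 1
    rw [Nat.cast_sub h1]
    push_cast; ring
  -- A = R + F + L
  have hRFL : Φ.A = R + Fm + L := by
    have hbig : Φ.A = ∑ j ∈ Finset.range (d + 1), ∑ i ∈ Finset.range (d + 1),
        Φ.Es i * Φ.A * Φ.Es j := by
      conv_lhs => rw [← one_mul Φ.A, ← mul_one (1 * Φ.A), ← Φ.hEssum]
      rw [Finset.mul_sum]
      refine Finset.sum_congr rfl fun j hj => ?_
      rw [Finset.sum_mul, Finset.sum_mul]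
    have key : ∀ j ∈ Finset.range (d + 1), ∀ i ∈ Finset.range (d + 1),
        Φ.Es i * Φ.A * Φ.Es j =
          (if i = j + 1 then Φ.Es i * Φ.A * Φ.Es j else 0) +
          (if i = j then Φ.Es i * Φ.A * Φ.Es j else 0) +
          (if i + 1 = j then Φ.Es i * Φ.A * Φ.Es j else 0) := by
      intro j hj i hi
      have hj' : j ≤ d := Nat.lt_succ_iff.mp (Finset.mem_range.mp hj)
      have hi' : i ≤ d := Nat.lt_succ_iff.mp (Finset.mem_range.mp hi)
      by_cases e1 : i = j + 1
      · rw [if_pos e1, if_neg (by omega), if_neg (by omega), add_zero, add_zero]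
      by_cases e2 : i = j
      · rw [if_neg e1, if_pos e2, if_neg (by omega), zero_add, add_zero]
      by_cases e3 : i + 1 = j
      · rw [if_neg e1, if_neg e2, if_pos e3, zero_add, zero_add]
      · rw [if_neg e1, if_neg e2, if_neg e3, Φ.htri i hi' j hj' (by omega)]
        simp
    rw [hbig, Finset.sum_congr rfl (fun j hj => Finset.sum_congr rfl (key j hj))]
    have split : ∀ j ∈ Finset.range (d + 1),
        (∑ i ∈ Finset.range (d + 1),
          ((if i = j + 1 then Φ.Es i * Φ.A * Φ.Es j else 0) +
           (if i = j then Φ.Es i * Φ.A * Φ.Es j else 0) +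
           (if i + 1 = j then Φ.Es i * Φ.A * Φ.Es j else 0)))
        = (∑ i ∈ Finset.range (d + 1), (if i = j + 1 then Φ.Es i * Φ.A * Φ.Es j else 0)) +
          (∑ i ∈ Finset.range (d + 1), (if i = j then Φ.Es i * Φ.A * Φ.Es j else 0)) +
          (∑ i ∈ Finset.range (d + 1), (if i + 1 = j then Φ.Es i * Φ.A * Φ.Es j else 0)) := by
      intro j hj
      rw [Finset.sum_add_distrib, Finset.sum_add_distrib]
    rw [Finset.sum_congr rfl split, Finset.sum_add_distrib, Finset.sum_add_distrib]
    congr 1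
    · congr 1
      · -- R part
        rw [hR]
        rw [Finset.sum_congr rfl (fun j _ => Finset.sum_ite_eq' (Finset.range (d + 1)) (j + 1)
          (fun i => Φ.Es i * Φ.A * Φ.Es j)), Finset.sum_range_succ,
          if_neg (by simp), add_zero]
        refine Finset.sum_congr rfl fun j hj => ?_
        have hj' := Finset.mem_range.mp hj
        rw [if_pos (Finset.mem_range.mpr (by omega))]
      · -- F part
        rw [hF]
        refine Finset.sum_congr rfl fun j hj => ?_
        rw [Finset.sum_ite_eq' (Finset.range (d + 1)) j (fun i => Φ.Es i * Φ.A * Φ.Es j),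
          if_pos hj]
    · -- L part
      rw [hL]
      have inner : ∀ j ∈ Finset.range (d + 1),
          (∑ i ∈ Finset.range (d + 1), (if i + 1 = j then Φ.Es i * Φ.A * Φ.Es j else 0))
            = (if 1 ≤ j then Φ.Es (j - 1) * Φ.A * Φ.Es j else 0) := by
        intro j hj
        have hj' := Finset.mem_range.mp hj
        by_cases hj1 : 1 ≤ j
        · rw [if_pos hj1,
            Finset.sum_congr rfl (fun i _ => if_congr (show i + 1 = j ↔ i = j - 1 by omega) rfl rfl),
            Finset.sum_ite_eq' (Finset.range (d + 1)) (j - 1) (fun i => Φ.Es i * Φ.A * Φ.Es j),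
            if_pos (Finset.mem_range.mpr (by omega))]
        · rw [if_neg hj1]
          exact Finset.sum_eq_zero fun i _ => if_neg (by omega)
      rw [Finset.sum_congr rfl inner]
      have h0 : Finset.range (d + 1) = insert 0 (Finset.Icc 1 d) := by
        ext x; simp [Finset.mem_range, Finset.mem_Icc]; omega
      rw [h0, Finset.sum_insert (by simp), if_neg (by omega), zero_add]
      exact Finset.sum_congr rfl fun j hj => if_pos (Finset.mem_Icc.mp hj).1
  -- scalars
  have h2 : (2 : F) ≠ 0 := by
    have hne := Φ.hθs 0 (Nat.zero_le d) 1 hd (by norm_num)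
    rw [hθs 0 (Nat.zero_le d), hθs 1 hd] at hne
    intro h; apply hne; push_cast; rw [h]; ring
  have h4 : (4 : F) ≠ 0 := by
    have : (4 : F) = 2 ^ 2 := by norm_num
    rw [this]; exact pow_ne_zero _ h2
  have h8 : (8 : F) ≠ 0 := by
    have : (8 : F) = 2 ^ 3 := by norm_num
    rw [this]; exact pow_ne_zero _ h2
  have hC : Φ.As * Φ.A - Φ.A * Φ.As = (-2 : F) • R + (2 : F) • L := by
    have e : Φ.As * Φ.A - Φ.A * Φ.As =
        (Φ.As * R - R * Φ.As) + (Φ.As * Fm - Fm * Φ.As) + (Φ.As * L - L * Φ.As) := by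
      rw [hRFL]; noncomm_ring
    rw [e, hcR, hcF, hcL]; module
  have hCC : Φ.As * (Φ.As * Φ.A - Φ.A * Φ.As) - (Φ.As * Φ.A - Φ.A * Φ.As) * Φ.As
      = (4 : F) • R + (4 : F) • L := by
    have r1 : Φ.As * R = R * Φ.As + (-2 : F) • R := by rw [← hcR]; abel
    have l1 : Φ.As * L = L * Φ.As + (2 : F) • L := by rw [← hcL]; abel
    rw [hC, mul_add, add_mul, mul_smul_comm, mul_smul_comm, smul_mul_assoc, smul_mul_assoc,
      r1, l1]
    module
  refine ⟨hcL, hcF, hcR, ?_, ?_, ?_⟩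
  · rw [hCC, hC]
    match_scalars <;> field_simp <;> ring
  · rw [hCC, hRFL]
    match_scalars <;> field_simp <;> ring
  · rw [hCC, hC]
    match_scalars <;> field_simp <;> ring
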